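/- Let M be an ℕ-valued random variable whose probability mass function f_M satisfies the Katz recursion f_M(k) = (a + b/k) · f_M(k−1) for all integers k ≥ 1, where a < 1 and b > 0. Then the probability generating function P_M(t) = ∑_{k=0}^∞ f_M(k) t^k satisfies the differential equation P'_M(t) = (a+b)/(1 − a t) · P_M(t) for every t with |t| < 1 (and a t ≠ 1). -/

import Mathlib

open MeasureTheory ProbabilityTheory

/-- If `M` is ℕ-valued and its pmf satisfies the Katz recursion
`f_M(k) = (a + b/k) f_M(k-1)` for `k ≥ 1` with `a < 1` and `b > 0`, then its pgf satisfies
`P'_M(t) = (a+b)/(1 - a t) · P_M(t)` for every `t` with `|t| < 1` and `a t ≠ 1`. -/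
theorem katz_pgf_differential_equation
    {Ω : Type*} [MeasurableSpace Ω] (μ : Measure Ω) [IsProbabilityMeasure μ]
    (M : Ω → ℕ) (hM : Measurable M)
    (a b : ℝ) (ha : a < 1) (hb : 0 < b)
    (hkatz : ∀ k : ℕ, (μ {ω | M ω = k + 1}).toReal
      = (a + b / (k + 1)) * (μ {ω | M ω = k}).toReal)
    (t : ℝ) (ht : |t| < 1) (hat : a * t ≠ 1) :
    HasDerivAt (fun s : ℝ => ∫ ω, s ^ (M ω) ∂μ)
      ((a + b) / (1 - a * t) * ∫ ω, t ^ (M ω) ∂μ) t := by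
  classical
  set f : ℕ → ℝ := fun k => (μ {ω | M ω = k}).toReal with hfdef
  have hf0 : ∀ k, 0 ≤ f k := fun k => ENNReal.toReal_nonneg
  have hf1 : ∀ k, f k ≤ 1 := by
    intro k
    have h1 : μ {ω | M ω = k} ≤ 1 := prob_le_one
    calc f k ≤ (1 : ENNReal).toReal := ENNReal.toReal_mono (by simp) h1
    _ = 1 := by simp
  have habs : ∀ k, |f k| ≤ 1 := fun k => by
    rw [abs_of_nonneg (hf0 k)]; exact hf1 k
  -- Step A: integral equals the power series
  have hint : ∀ s : ℝ, |s| ≤ 1 → ∫ ω, s ^ (M ω) ∂μ = ∑' k, f k * s ^ k := by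
    intro s hs
    have hpow : ∀ n : ℕ, |s ^ n| ≤ 1 := by
      intro n; rw [abs_pow]; exact pow_le_one₀ (abs_nonneg s) hs
    have hmap : IsProbabilityMeasure (μ.map M) := Measure.isProbabilityMeasure_map hM.aemeasurable
    have hintg : Integrable (fun n : ℕ => s ^ n) (μ.map M) := by
      refine Integrable.mono' (integrable_const 1) ?_ ?_
      · exact (measurable_const.pow measurable_id).aestronglyMeasurable
      · exact Filter.Eventually.of_forall fun n => by simpa using hpow n
    rw [← integral_map hM.aemeasurable hintg.aestronglyMeasurable,
      integral_countable' hintg]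
    refine tsum_congr fun k => ?_
    rw [smul_eq_mul, measureReal_def, Measure.map_apply hM (measurableSet_singleton k)]
    have : M ⁻¹' {k} = {ω | M ω = k} := by ext ω; simp
    rw [this]
  -- Setup for the derivative of the power series
  set r : ℝ := (1 + |t|) / 2 with hrdef
  have hr0 : 0 < r := by positivity
  have htr : |t| < r := by rw [hrdef]; linarith
  have hr1 : r < 1 := by rw [hrdef]; linarith
  set u : ℕ → ℝ := fun k => r⁻¹ * ((k : ℝ) * r ^ k) with hudef
  have hu : Summable u := by
    have := summable_pow_mul_geometric_of_norm_lt_one (R := ℝ) 1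
      (by rwa [Real.norm_eq_abs, abs_of_pos hr0])
    simpa [hudef, pow_one] using this.mul_left r⁻¹
  have hbound : ∀ (k : ℕ) (y : ℝ), y ∈ Metric.ball (0 : ℝ) r →
      ‖f k * ((k : ℝ) * y ^ (k - 1))‖ ≤ u k := by
    intro k y hy
    rw [Metric.mem_ball, dist_zero_right, Real.norm_eq_abs] at hy
    rw [Real.norm_eq_abs, abs_mul, abs_mul, abs_pow, Nat.abs_cast]
    have h1 : |f k| * ((k : ℝ) * |y| ^ (k - 1)) ≤ 1 * ((k : ℝ) * r ^ (k - 1)) := by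
      apply mul_le_mul (habs k) ?_ (by positivity) zero_le_one
      exact mul_le_mul_of_nonneg_left
        (pow_le_pow_left₀ (abs_nonneg y) hy.le _) (Nat.cast_nonneg k)
    rw [one_mul] at h1
    refine h1.trans ?_
    rcases k with _ | k
    · simp [hudef]
    · rw [hudef]
      have : r ^ (k + 1 - 1) = r⁻¹ * r ^ (k + 1) := by
        rw [Nat.add_sub_cancel, pow_succ']
        field_simp
      rw [this]; ring_nf; rfl
  have hderiv : ∀ (k : ℕ) (y : ℝ), y ∈ Metric.ball (0 : ℝ) r →
      HasDerivAt (fun z : ℝ => f k * z ^ k) (f k * ((k : ℝ) * y ^ (k - 1))) y :=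
    fun k y _ => (hasDerivAt_pow k y).const_mul (f k)
  have hsum0 : Summable fun k => f k * t ^ k := by
    refine Summable.of_norm_bounded (summable_geometric_of_lt_one (abs_nonneg t) ht) ?_
    intro k
    rw [Real.norm_eq_abs, abs_mul, abs_pow]
    calc |f k| * |t| ^ k ≤ 1 * |t| ^ k := by
          exact mul_le_mul_of_nonneg_right (habs k) (by positivity)
    _ = |t| ^ k := one_mul _
  have htball : t ∈ Metric.ball (0 : ℝ) r := by
    rwa [Metric.mem_ball, dist_zero_right, Real.norm_eq_abs]
  have hD : HasDerivAt (fun z : ℝ => ∑' k, f k * z ^ k)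
      (∑' k, f k * ((k : ℝ) * t ^ (k - 1))) t :=
    hasDerivAt_tsum_of_isPreconnected hu Metric.isOpen_ball
      (convex_ball (0 : ℝ) r).isPreconnected
      hderiv hbound htball hsum0 htball
  -- Step B: transfer to the integral via local equality
  have heq : (fun s : ℝ => ∫ ω, s ^ (M ω) ∂μ) =ᶠ[nhds t] fun z : ℝ => ∑' k, f k * z ^ k := by
    have hmem : Metric.ball (0 : ℝ) 1 ∈ nhds t :=
      Metric.isOpen_ball.mem_nhds (by rwa [Metric.mem_ball, dist_zero_right, Real.norm_eq_abs])
    filter_upwards [hmem] with y hy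
    rw [Metric.mem_ball, dist_zero_right, Real.norm_eq_abs] at hy
    exact hint y hy.le
  have hD' : HasDerivAt (fun s : ℝ => ∫ ω, s ^ (M ω) ∂μ)
      (∑' k, f k * ((k : ℝ) * t ^ (k - 1))) t := hD.congr_of_eventuallyEq heq
  -- Step C: identify the derivative value
  set D : ℝ := ∑' k, f k * ((k : ℝ) * t ^ (k - 1)) with hDdef
  set P : ℝ := ∑' k, f k * t ^ k with hPdef
  have hsumg : Summable fun k => f k * ((k : ℝ) * t ^ (k - 1)) :=
    Summable.of_norm_bounded hu fun k => hbound k t htball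
  -- key identity: D = a*t*D + (a+b)*P
  have hkey : D = a * t * D + (a + b) * P := by
    have hzero : f 0 * ((0 : ℝ) * t ^ (0 - 1)) = 0 := by simp
    have hshift : D = ∑' k : ℕ, f (k + 1) * (((k : ℕ) + 1 : ℝ) * t ^ k) := by
      rw [hDdef, Summable.tsum_eq_zero_add hsumg]
      simp only [Nat.cast_zero, zero_mul, mul_zero, zero_add]
      refine tsum_congr fun k => ?_
      rw [Nat.add_sub_cancel]
      push_cast
      ring
    have hterm : ∀ k : ℕ, f (k + 1) * (((k : ℕ) + 1 : ℝ) * t ^ k)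
        = a * t * (f k * ((k : ℝ) * t ^ (k - 1))) + (a + b) * (f k * t ^ k) := by
      intro k
      have hk1 : ((k : ℝ) + 1) ≠ 0 := by positivity
      have h1 : f (k + 1) = (a + b / ((k : ℝ) + 1)) * f k := by
        have := hkatz k
        push_cast at this ⊢
        simpa using this
      rw [h1]
      have h2 : (a + b / ((k : ℝ) + 1)) * ((k : ℝ) + 1) = a * (k : ℝ) + (a + b) := by
        field_simp; ring
      have h3 : t * t ^ (k - 1) * (k : ℝ) = (k : ℝ) * t ^ k := by
        rcases k with _ | k
        · simp
        · rw [Nat.add_sub_cancel]; ring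
      calc (a + b / ((k : ℝ) + 1)) * f k * (((k : ℝ) + 1) * t ^ k)
          = ((a + b / ((k : ℝ) + 1)) * ((k : ℝ) + 1)) * (f k * t ^ k) := by ring
        _ = (a * (k : ℝ) + (a + b)) * (f k * t ^ k) := by rw [h2]
        _ = a * (f k * ((k : ℝ) * t ^ k)) + (a + b) * (f k * t ^ k) := by ring
        _ = a * t * (f k * ((k : ℝ) * t ^ (k - 1))) + (a + b) * (f k * t ^ k) := by
            congr 1
            rw [mul_assoc a t]
            congr 1
            rw [show t * (f k * ((k : ℝ) * t ^ (k - 1))) = f k * (t * t ^ (k - 1) * (k : ℝ)) by ring, h3]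
    calc D = ∑' k : ℕ, f (k + 1) * (((k : ℕ) + 1 : ℝ) * t ^ k) := hshift
      _ = ∑' k : ℕ, (a * t * (f k * ((k : ℝ) * t ^ (k - 1))) + (a + b) * (f k * t ^ k)) :=
          tsum_congr hterm
      _ = a * t * D + (a + b) * P := by
          have hA : ∑' k : ℕ, a * t * (f k * ((k : ℝ) * t ^ (k - 1))) = a * t * D :=
            tsum_mul_left
          have hB : ∑' k : ℕ, (a + b) * (f k * t ^ k) = (a + b) * P := tsum_mul_left
          rw [Summable.tsum_add (hsumg.mul_left (a * t)) (hsum0.mul_left (a + b)), hA, hB]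
  have h1at : (1 : ℝ) - a * t ≠ 0 := by
    intro h; apply hat; linarith [h]
  have hDval : D = (a + b) / (1 - a * t) * P := by
    field_simp
    linarith [hkey]
  rw [hint t ht.le, ← hPdef, ← hDval]
  exact hD'
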